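/- Every element of the image of D and every element of the image of T lies in the (ℤ/2ℤ)-subalgebra of R generated by the elements b_J = D(m_J) and t_J = T(m_J) for all subsets J ⊆ {1,…,⌊(n−1)/2⌋} (including t_∅ = x_1), together with the elements x_{2i}² for all i with 2 ≤ 2i ≤ n and the element x_n. (This is Corollary 3.9 of the paper: the images of the Steenrod squares Sq²_ℒ on Ch^•(BGL_n) are contained in the subring generated by Sq²_𝒪 and Sq²_{det γ_n} of products of even Stiefel–Whitney classes, Sq²_{det γ_n}(1), the squares c̄_{2i}², and c̄_n.) -/
import Mathlib

open MvPolynomial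

noncomputable def xv (n : ℕ) (j : ℕ) : MvPolynomial (Fin n) (ZMod 2) :=
  if h : 1 ≤ j ∧ j ≤ n then X (⟨j - 1, by omega⟩ : Fin n) else 0

noncomputable def mprod (n : ℕ) (J : Finset ℕ) : MvPolynomial (Fin n) (ZMod 2) :=
  ∏ j ∈ J, xv n (2 * j)

noncomputable def genSet3 (n : ℕ)
    (D : Derivation (ZMod 2) (MvPolynomial (Fin n) (ZMod 2)) (MvPolynomial (Fin n) (ZMod 2))) :
    Set (MvPolynomial (Fin n) (ZMod 2)) :=
  {g | ∃ J : Finset ℕ, J ⊆ Finset.Icc 1 ((n - 1) / 2) ∧ g = D (mprod n J)} ∪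
  {g | ∃ J : Finset ℕ, J ⊆ Finset.Icc 1 ((n - 1) / 2) ∧
      g = xv n 1 * mprod n J + D (mprod n J)} ∪
  {g | ∃ i : ℕ, 2 ≤ 2 * i ∧ 2 * i ≤ n ∧ g = (xv n (2 * i)) ^ 2} ∪
  {xv n n}

section Aux

variable (n : ℕ)

lemma xv_out {j : ℕ} (h : ¬ (1 ≤ j ∧ j ≤ n)) : xv n j = 0 := by
  simp only [xv, dif_neg h]

lemma char2 (u : MvPolynomial (Fin n) (ZMod 2)) : u + u = 0 := by
  have h2 : (2 : MvPolynomial (Fin n) (ZMod 2)) = 0 := by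
    exact_mod_cast CharP.cast_eq_zero (MvPolynomial (Fin n) (ZMod 2)) 2
  calc u + u = 2 * u := by ring
  _ = 0 := by rw [h2, zero_mul]

/-- The auxiliary subalgebra generated by odd variables and squares of variables. -/
noncomputable def Bsub : Subalgebra (ZMod 2) (MvPolynomial (Fin n) (ZMod 2)) :=
  Algebra.adjoin (ZMod 2)
    ({p | ∃ k : ℕ, k % 2 = 1 ∧ p = xv n k} ∪ {p | ∃ k : ℕ, p = (xv n k) ^ 2})

variable (D : Derivation (ZMod 2) (MvPolynomial (Fin n) (ZMod 2)) (MvPolynomial (Fin n) (ZMod 2)))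

/-- D of any element of B has the form x₁ * (element of B). -/
lemma D_Bsub (hD : ∀ j : ℕ, 1 ≤ j → j ≤ n →
      D (xv n j) = xv n 1 * xv n j + C ((j - 1 : ℕ) : ZMod 2) * xv n (j + 1)) :
    ∀ a ∈ Bsub n, ∃ a' ∈ Bsub n, D a = xv n 1 * a' := by
  intro a ha
  induction ha using Algebra.adjoin_induction with
  | mem x hx =>
    rcases hx with ⟨k, hk, rfl⟩ | ⟨k, rfl⟩
    · by_cases hkn : 1 ≤ k ∧ k ≤ n
      · refine ⟨xv n k, Algebra.subset_adjoin (Or.inl ⟨k, hk, rfl⟩), ?_⟩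
        rw [hD k hkn.1 hkn.2]
        have : ((k - 1 : ℕ) : ZMod 2) = 0 := by
          have hk1 : k - 1 = 2 * ((k - 1) / 2) := by omega
          rw [hk1]
          push_cast
          rw [show (2 : ZMod 2) = 0 by decide]
          ring
        rw [this, map_zero, zero_mul, add_zero]
      · refine ⟨0, Subalgebra.zero_mem _, ?_⟩
        rw [xv_out n hkn, map_zero, mul_zero]
    · refine ⟨0, Subalgebra.zero_mem _, ?_⟩
      rw [mul_zero, pow_two, Derivation.leibniz, smul_eq_mul, char2]
  | algebraMap r =>
    refine ⟨0, Subalgebra.zero_mem _, ?_⟩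
    rw [Derivation.map_algebraMap, mul_zero]
  | add x y hx hy ihx ihy =>
    obtain ⟨a', ha', hda⟩ := ihx
    obtain ⟨b', hb', hdb⟩ := ihy
    exact ⟨a' + b', Subalgebra.add_mem _ ha' hb', by rw [map_add, hda, hdb]; ring⟩
  | mul x y hx hy ihx ihy =>
    obtain ⟨a', ha', hda⟩ := ihx
    obtain ⟨b', hb', hdb⟩ := ihy
    refine ⟨x * b' + y * a', ?_, ?_⟩
    · exact Subalgebra.add_mem _ (Subalgebra.mul_mem _ hx hb')
        (Subalgebra.mul_mem _ hy ha')
    · rw [Derivation.leibniz, smul_eq_mul, smul_eq_mul, hda, hdb]; ring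

end Aux

theorem image_steenrod_in_subalgebra (n : ℕ) (hn : 1 ≤ n)
    (D : Derivation (ZMod 2) (MvPolynomial (Fin n) (ZMod 2)) (MvPolynomial (Fin n) (ZMod 2)))
    (hD : ∀ j : ℕ, 1 ≤ j → j ≤ n →
      D (xv n j) = xv n 1 * xv n j + C ((j - 1 : ℕ) : ZMod 2) * xv n (j + 1)) :
    ∀ f : MvPolynomial (Fin n) (ZMod 2),
      D f ∈ Algebra.adjoin (ZMod 2) (genSet3 n D) ∧
      xv n 1 * f + D f ∈ Algebra.adjoin (ZMod 2) (genSet3 n D) := by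
  set A := Algebra.adjoin (ZMod 2) (genSet3 n D) with hA
  set R₀ := MvPolynomial (Fin n) (ZMod 2)
  -- A contains all the generator classes
  have hbA : ∀ J : Finset ℕ, J ⊆ Finset.Icc 1 ((n - 1) / 2) → D (mprod n J) ∈ A :=
    fun J hJ => Algebra.subset_adjoin (Or.inl (Or.inl (Or.inl ⟨J, hJ, rfl⟩)))
  have htA : ∀ J : Finset ℕ, J ⊆ Finset.Icc 1 ((n - 1) / 2) →
      xv n 1 * mprod n J + D (mprod n J) ∈ A :=
    fun J hJ => Algebra.subset_adjoin (Or.inl (Or.inl (Or.inr ⟨J, hJ, rfl⟩)))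
  have hsqA : ∀ i : ℕ, 2 ≤ 2 * i → 2 * i ≤ n → (xv n (2 * i)) ^ 2 ∈ A :=
    fun i h1 h2 => Algebra.subset_adjoin (Or.inl (Or.inr ⟨i, h1, h2, rfl⟩))
  have hxnA : xv n n ∈ A := Algebra.subset_adjoin (Or.inr rfl)
  -- odd variables are in A
  have hoddA : ∀ k : ℕ, k % 2 = 1 → xv n k ∈ A := by
    intro k hk
    by_cases hkn : 1 ≤ k ∧ k ≤ n
    · rcases eq_or_lt_of_le hkn.1 with h1 | h1
      · -- k = 1 : x₁ = t_∅
        have := htA ∅ (Finset.empty_subset _)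
        simpa [mprod, ← h1] using this
      · -- k = 2j+1, j ≥ 1
        set j := k / 2 with hj
        have hk2 : k = 2 * j + 1 := by omega
        have hJ : ({j} : Finset ℕ) ⊆ Finset.Icc 1 ((n - 1) / 2) := by
          intro x hx
          simp only [Finset.mem_singleton] at hx
          subst hx
          simp only [Finset.mem_Icc]
          omega
        have hm : mprod n {j} = xv n (2 * j) := by
          simp [mprod]
        have hDm : D (mprod n {j}) = xv n 1 * xv n (2 * j) + xv n k := by
          rw [hm, hD (2 * j) (by omega) (by omega)]
          congr 1
          have hcast : ((2 * j - 1 : ℕ) : ZMod 2) = 1 := by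
            have : 2 * j - 1 = 2 * (j - 1) + 1 := by omega
            rw [this]
            push_cast
            rw [show (2 : ZMod 2) = 0 by decide]
            ring
          rw [hcast, map_one, one_mul, show 2 * j + 1 = k from hk2.symm]
        have := htA {j} hJ
        rw [hDm, hm] at this
        rw [← add_assoc, char2, zero_add] at this
        exact this
    · rw [xv_out n hkn]; exact Subalgebra.zero_mem _
  -- squares of variables are in A
  have hsq'A : ∀ k : ℕ, (xv n k) ^ 2 ∈ A := by
    intro k
    by_cases hkn : 1 ≤ k ∧ k ≤ n
    · rcases Nat.even_or_odd k with he | ho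
      · obtain ⟨i, hi⟩ := he
        have : k = 2 * i := by omega
        rw [this]
        exact hsqA i (by omega) (by omega)
      · exact pow_mem (hoddA k (Nat.odd_iff.mp ho)) 2
    · rw [xv_out n hkn]
      simp only [ne_eq, OfNat.ofNat_ne_zero, not_false_eq_true, zero_pow]
      exact Subalgebra.zero_mem _
  -- B ⊆ A
  have hBA : ∀ a ∈ Bsub n, a ∈ A := by
    intro a ha
    induction ha using Algebra.adjoin_induction with
    | mem x hx =>
      rcases hx with ⟨k, hk, rfl⟩ | ⟨k, rfl⟩
      · exact hoddA k hk
      · exact hsq'A k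
    | algebraMap r => exact Subalgebra.algebraMap_mem _ _
    | add x y hx hy ihx ihy => exact Subalgebra.add_mem _ ihx ihy
    | mul x y hx hy ihx ihy => exact Subalgebra.mul_mem _ ihx ihy
  have hDB := D_Bsub n D hD
  -- D(x_n) = x_1 * x_n
  have hDxn : D (xv n n) = xv n 1 * xv n n := by
    rw [hD n hn le_rfl, xv_out n (j := n + 1) (by omega), mul_zero, add_zero]
  -- key computation for generators a * m_J
  have key1 : ∀ a ∈ Bsub n, ∀ J : Finset ℕ, J ⊆ Finset.Icc 1 ((n - 1) / 2) →
      D (a * mprod n J) ∈ A ∧ xv n 1 * (a * mprod n J) + D (a * mprod n J) ∈ A := by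
    intro a ha J hJ
    obtain ⟨a', ha', hda⟩ := hDB a ha
    set m := mprod n J
    set b := D m with hb
    have e1 : (xv n 1 * m + b) + b = xv n 1 * m := by
      rw [add_assoc, char2, add_zero]
    have hD1 : D (a * m) = a * b + a' * (xv n 1 * m) := by
      rw [Derivation.leibniz, smul_eq_mul, smul_eq_mul, hda]; ring
    constructor
    · have : D (a * m) = a * b + a' * ((xv n 1 * m + b) + b) := by rw [e1]; exact hD1
      rw [this]
      exact Subalgebra.add_mem _ (Subalgebra.mul_mem _ (hBA a ha) (hbA J hJ))
        (Subalgebra.mul_mem _ (hBA a' ha')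
          (Subalgebra.add_mem _ (htA J hJ) (hbA J hJ)))
    · have : xv n 1 * (a * m) + D (a * m)
          = a * (xv n 1 * m + b) + a' * ((xv n 1 * m + b) + b) := by
        rw [e1, hD1]; ring
      rw [this]
      exact Subalgebra.add_mem _ (Subalgebra.mul_mem _ (hBA a ha) (htA J hJ))
        (Subalgebra.mul_mem _ (hBA a' ha')
          (Subalgebra.add_mem _ (htA J hJ) (hbA J hJ)))
  -- key computation for generators a * m_J * x_n
  have key2 : ∀ a ∈ Bsub n, ∀ J : Finset ℕ, J ⊆ Finset.Icc 1 ((n - 1) / 2) →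
      D (a * mprod n J * xv n n) ∈ A ∧
      xv n 1 * (a * mprod n J * xv n n) + D (a * mprod n J * xv n n) ∈ A := by
    intro a ha J hJ
    obtain ⟨h1, h2⟩ := key1 a ha J hJ
    set m := mprod n J
    have hL : D (a * m * xv n n) = (a * m) * D (xv n n) + xv n n * D (a * m) := by
      rw [Derivation.leibniz, smul_eq_mul, smul_eq_mul]
    constructor
    · have : D (a * m * xv n n) = xv n n * (xv n 1 * (a * m) + D (a * m)) := by
        rw [hL, hDxn]; ring
      rw [this]
      exact Subalgebra.mul_mem _ hxnA h2
    · have : xv n 1 * (a * m * xv n n) + D (a * m * xv n n) = xv n n * D (a * m) := by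
        rw [hL, hDxn]
        have h2z : (2 : MvPolynomial (Fin n) (ZMod 2)) = 0 := by
          exact_mod_cast CharP.cast_eq_zero (MvPolynomial (Fin n) (ZMod 2)) 2
        linear_combination (xv n 1 * a * m * xv n n) * h2z
      rw [this]
      exact Subalgebra.mul_mem _ hxnA h1
  -- the spanning set
  set G : Set (MvPolynomial (Fin n) (ZMod 2)) :=
    {p | ∃ a ∈ Bsub n, ∃ J : Finset ℕ, J ⊆ Finset.Icc 1 ((n - 1) / 2) ∧
        ∃ w, (w = 1 ∨ w = xv n n) ∧ p = a * mprod n J * w} with hG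
  -- G is closed (up to span) under multiplication by variables
  have hGX : ∀ p ∈ G, ∀ i : Fin n, p * X i ∈ G := by
    rintro p ⟨a, ha, J, hJ, w, hw, rfl⟩ i
    have hXi : X i = xv n ((i : ℕ) + 1) := by
      have hcond : 1 ≤ (i : ℕ) + 1 ∧ (i : ℕ) + 1 ≤ n := ⟨by omega, by omega⟩
      simp only [xv, dif_pos hcond]
      congr
    set k := (i : ℕ) + 1 with hk
    rw [hXi]
    by_cases hkn : k = n
    · rcases hw with rfl | rfl
      · exact ⟨a, ha, J, hJ, xv n n, Or.inr rfl, by rw [hkn]; ring⟩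
      · refine ⟨a * (xv n n) ^ 2, ?_, J, hJ, 1, Or.inl rfl, ?_⟩
        · exact Subalgebra.mul_mem _ ha
            (Algebra.subset_adjoin (Or.inr ⟨n, rfl⟩))
        · rw [hkn]; ring
    · have hklt : k < n := by omega
      rcases Nat.even_or_odd k with he | ho
      · -- k even, k = 2j, 1 ≤ j ≤ (n-1)/2
        obtain ⟨j, hj⟩ := he
        have hk2 : k = 2 * j := by omega
        have hj1 : 1 ≤ j := by omega
        have hjle : j ≤ (n - 1) / 2 := by omega
        by_cases hjJ : j ∈ J
        · refine ⟨a * (xv n (2 * j)) ^ 2, ?_, J.erase j,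
            (J.erase_subset j).trans hJ, w, hw, ?_⟩
          · exact Subalgebra.mul_mem _ ha
              (Algebra.subset_adjoin (Or.inr ⟨2 * j, rfl⟩))
          · have := Finset.mul_prod_erase J (fun j => xv n (2 * j)) hjJ
            simp only [mprod]
            rw [← this, hk2]
            ring
        · refine ⟨a, ha, insert j J, ?_, w, hw, ?_⟩
          · intro x hx
            rcases Finset.mem_insert.mp hx with rfl | hx
            · exact Finset.mem_Icc.mpr ⟨hj1, hjle⟩
            · exact hJ hx
          · have := Finset.prod_insert (f := fun j => xv n (2 * j)) hjJ
            simp only [mprod]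
            rw [this, hk2]
            ring
      · -- k odd : absorb into a
        refine ⟨a * xv n k, ?_, J, hJ, w, hw, by ring⟩
        exact Subalgebra.mul_mem _ ha
          (Algebra.subset_adjoin (Or.inl ⟨k, Nat.odd_iff.mp ho, rfl⟩))
  -- every polynomial lies in the span of G
  have hspan : ∀ f : MvPolynomial (Fin n) (ZMod 2), f ∈ Submodule.span (ZMod 2) G := by
    have h1G : (1 : MvPolynomial (Fin n) (ZMod 2)) ∈ G := by
      refine ⟨1, Subalgebra.one_mem _, ∅, Finset.empty_subset _, 1, Or.inl rfl, ?_⟩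
      simp [mprod]
    intro f
    induction f using MvPolynomial.induction_on with
    | C c =>
      have : (C c : MvPolynomial (Fin n) (ZMod 2)) = c • 1 := by
        rw [smul_eq_C_mul, mul_one]
      rw [this]
      exact Submodule.smul_mem _ c (Submodule.subset_span h1G)
    | add p q hp hq => exact Submodule.add_mem _ hp hq
    | mul_X p i hp =>
      induction hp using Submodule.span_induction with
      | mem x hx => exact Submodule.subset_span (hGX x hx i)
      | zero => rw [zero_mul]; exact Submodule.zero_mem _
      | add x y hx hy ihx ihy => rw [add_mul]; exact Submodule.add_mem _ ihx ihy
      | smul c x hx ihx => rw [smul_mul_assoc]; exact Submodule.smul_mem _ c ihx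
  -- conclude
  intro f
  have := hspan f
  induction this using Submodule.span_induction with
  | mem x hx =>
    obtain ⟨a, ha, J, hJ, w, hw, rfl⟩ := hx
    rcases hw with rfl | rfl
    · rw [mul_one]; exact key1 a ha J hJ
    · exact key2 a ha J hJ
  | zero =>
    constructor <;> simp only [map_zero, mul_zero, add_zero] <;>
      exact Subalgebra.zero_mem _
  | add x y hx hy ihx ihy =>
    constructor
    · rw [map_add]; exact Subalgebra.add_mem _ ihx.1 ihy.1
    · have : xv n 1 * (x + y) + D (x + y)
          = (xv n 1 * x + D x) + (xv n 1 * y + D y) := by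
        rw [map_add]; ring
      rw [this]
      exact Subalgebra.add_mem _ ihx.2 ihy.2
  | smul c x hx ihx =>
    constructor
    · rw [Derivation.map_smul]
      exact Submodule.smul_mem A.toSubmodule c ihx.1
    · have : xv n 1 * (c • x) + D (c • x) = c • (xv n 1 * x + D x) := by
        rw [Derivation.map_smul, smul_add, mul_smul_comm]
      rw [this]
      exact Submodule.smul_mem A.toSubmodule c ihx.2
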